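/- Let T and f be self-maps of a metric space (X,d) with T(X) ⊆ f(X), and suppose there exists c_1 ∈ [0,1) such that for all x, y ∈ X, d(Tx,Ty) ≤ c_1·max{ d(Tx,fy), d(Ty,fx), d(fx,fy) }. If the pair (T,f) is weakly compatible and either T(X) or f(X) is a complete metric subspace, then T and f have a unique common fixed point in X. -/
import Mathlib


/-- Babu et al. (2004): self-maps `T`, `f` of a metric space with `T(X) ⊆ f(X)`,
a quasi-contractive condition with constant `c₁ ∈ [0,1)`, `(T,f)` weakly compatible,
and either `T(X)` or `f(X)` complete, have a unique common fixed point. -/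
theorem babu_weakly_compatible
    {X : Type*} [MetricSpace X] [Nonempty X]
    (T f : X → X)
    (hsub : Set.range T ⊆ Set.range f)
    (c₁ : ℝ) (hc0 : 0 ≤ c₁) (hc1 : c₁ < 1)
    (hcontr : ∀ x y,
      dist (T x) (T y) ≤ c₁ * max (max (dist (T x) (f y)) (dist (T y) (f x)))
        (dist (f x) (f y)))
    (hwc : ∀ x, T x = f x → T (f x) = f (T x))
    (hcomplete : IsComplete (Set.range T) ∨ IsComplete (Set.range f)) :
    ∃! z, T z = z ∧ f z = z := by
  classical
  obtain ⟨x0⟩ := ‹Nonempty X›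
  choose g hg using fun a : X => hsub (⟨a, rfl⟩ : T a ∈ Set.range T)
  -- hg : ∀ a, f (g a) = T a
  set x : ℕ → X := fun n => g^[n] x0 with hxdef
  have hxs : ∀ n, x (n + 1) = g (x n) := fun n => Function.iterate_succ_apply' g n x0
  let z : ℕ → X := fun n => Nat.rec (f x0) (fun k _ => T (x k)) n
  have hzs : ∀ n, z (n + 1) = T (x n) := fun n => rfl
  have hfz : ∀ n, f (x n) = z n := by
    intro n
    cases n with
    | zero => rfl
    | succ k => rw [hxs k, hzs]; exact hg (x k)
  have h1c : (0:ℝ) < 1 - c₁ := by linarith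
  have key : ∀ i j, dist (z (i+1)) (z (j+1)) ≤
      c₁ * max (max (dist (z (i+1)) (z j)) (dist (z (j+1)) (z i))) (dist (z i) (z j)) := by
    intro i j
    have h := hcontr (x i) (x j)
    rwa [hfz i, hfz j, ← hzs i, ← hzs j] at h
  set D : ℝ := dist (z 0) (z 1) / (1 - c₁) with hDdef
  have hD0 : 0 ≤ D := div_nonneg dist_nonneg (le_of_lt h1c)
  have hbound : ∀ i j, dist (z i) (z j) ≤ D := by
    intro i j
    set n := max i j with hn
    have hS : (Finset.range (n+1) ×ˢ Finset.range (n+1)).Nonempty :=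
      ⟨(0,0), by simp⟩
    set δ : ℝ := (Finset.range (n+1) ×ˢ Finset.range (n+1)).sup' hS
      (fun p => dist (z p.1) (z p.2)) with hδdef
    have hδmem : ∀ a b, a ≤ n → b ≤ n → dist (z a) (z b) ≤ δ := by
      intro a b ha hb
      exact Finset.le_sup' (f := fun p => dist (z p.1) (z p.2)) (b := (a, b))
        (Finset.mem_product.mpr ⟨Finset.mem_range.mpr (Nat.lt_succ_of_le ha),
          Finset.mem_range.mpr (Nat.lt_succ_of_le hb)⟩)
    have hδ0 : 0 ≤ δ := le_trans dist_nonneg (hδmem 0 0 (Nat.zero_le _) (Nat.zero_le _))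
    have hA : ∀ a b, 1 ≤ a → a ≤ n → 1 ≤ b → b ≤ n → dist (z a) (z b) ≤ c₁ * δ := by
      intro a b ha1 han hb1 hbn
      obtain ⟨a', rfl⟩ := Nat.exists_eq_succ_of_ne_zero (Nat.one_le_iff_ne_zero.mp ha1)
      obtain ⟨b', rfl⟩ := Nat.exists_eq_succ_of_ne_zero (Nat.one_le_iff_ne_zero.mp hb1)
      refine le_trans (key a' b') ?_
      have h1 : dist (z (a'+1)) (z b') ≤ δ :=
        hδmem _ _ han (le_trans (Nat.le_succ b') hbn)
      have h2 : dist (z (b'+1)) (z a') ≤ δ :=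
        hδmem _ _ hbn (le_trans (Nat.le_succ a') han)
      have h3 : dist (z a') (z b') ≤ δ :=
        hδmem _ _ (le_trans (Nat.le_succ a') han) (le_trans (Nat.le_succ b') hbn)
      have : max (max (dist (z (a'+1)) (z b')) (dist (z (b'+1)) (z a'))) (dist (z a') (z b')) ≤ δ := by
        exact max_le (max_le h1 h2) h3
      exact mul_le_mul_of_nonneg_left this hc0
    have hδD : δ ≤ D := by
      obtain ⟨p, hp, hpe0⟩ := Finset.exists_mem_eq_sup' hS (fun p => dist (z p.1) (z p.2))
      have hpe : δ = dist (z p.1) (z p.2) := hδdef.trans hpe0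
      simp only [Finset.mem_product, Finset.mem_range, Nat.lt_succ_iff] at hp
      rcases Nat.eq_zero_or_pos p.1 with h1 | h1 <;> rcases Nat.eq_zero_or_pos p.2 with h2 | h2
      · rw [hpe, h1, h2]
        simpa using hD0
      · -- p.1 = 0, p.2 ≥ 1
        have hn1 : 1 ≤ n := le_trans h2 hp.2
        have : δ ≤ dist (z 0) (z 1) + c₁ * δ := by
          calc δ = dist (z p.1) (z p.2) := hpe
            _ ≤ dist (z p.1) (z 1) + dist (z 1) (z p.2) := dist_triangle _ _ _
            _ ≤ dist (z 0) (z 1) + c₁ * δ := by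
                rw [h1]
                exact add_le_add le_rfl (hA 1 p.2 le_rfl hn1 h2 hp.2)
        rw [hDdef, le_div_iff₀ h1c]; nlinarith
      · have hn1 : 1 ≤ n := le_trans h1 hp.1
        have : δ ≤ dist (z 0) (z 1) + c₁ * δ := by
          calc δ = dist (z p.1) (z p.2) := hpe
            _ ≤ dist (z p.1) (z 1) + dist (z 1) (z p.2) := dist_triangle _ _ _
            _ ≤ c₁ * δ + dist (z 0) (z 1) := by
                rw [h2, dist_comm (z 1) (z 0)]
                exact add_le_add (hA p.1 1 h1 hp.1 le_rfl hn1) le_rfl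
            _ = dist (z 0) (z 1) + c₁ * δ := by ring
        rw [hDdef, le_div_iff₀ h1c]; nlinarith
      · have : δ ≤ c₁ * δ := hpe ▸ hA p.1 p.2 h1 hp.1 h2 hp.2
        have hδz : δ ≤ 0 := by nlinarith
        linarith
    exact le_trans (hδmem i j (le_max_left i j) (le_max_right i j)) hδD
  have hdecay : ∀ n, ∀ i j, n ≤ i → n ≤ j → dist (z i) (z j) ≤ c₁ ^ n * D := by
    intro n
    induction n with
    | zero => intro i j _ _; simpa using hbound i j
    | succ n ih =>
      intro i j hi hj
      obtain ⟨i', rfl⟩ := Nat.exists_eq_succ_of_ne_zero (by omega : i ≠ 0)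
      obtain ⟨j', rfl⟩ := Nat.exists_eq_succ_of_ne_zero (by omega : j ≠ 0)
      have hi' : n ≤ i' := by omega
      have hj' : n ≤ j' := by omega
      refine le_trans (key i' j') ?_
      have h1 : dist (z (i'+1)) (z j') ≤ c₁ ^ n * D := ih (i'+1) j' (by omega) hj'
      have h2 : dist (z (j'+1)) (z i') ≤ c₁ ^ n * D := ih (j'+1) i' (by omega) hi'
      have h3 : dist (z i') (z j') ≤ c₁ ^ n * D := ih i' j' hi' hj'
      have hmax : max (max (dist (z (i'+1)) (z j')) (dist (z (j'+1)) (z i'))) (dist (z i') (z j'))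
          ≤ c₁ ^ n * D := max_le (max_le h1 h2) h3
      calc c₁ * _ ≤ c₁ * (c₁ ^ n * D) := mul_le_mul_of_nonneg_left hmax hc0
        _ = c₁ ^ (n+1) * D := by ring
  set y : ℕ → X := fun n => z (n + 1) with hydef
  have hycauchy : CauchySeq y := by
    apply cauchySeq_of_le_geometric c₁ D hc1
    intro n
    have := hdecay n (n+1) (n+2) (by omega) (by omega)
    calc dist (y n) (y (n+1)) = dist (z (n+1)) (z (n+2)) := rfl
      _ ≤ c₁ ^ n * D := this
      _ = D * c₁ ^ n := by ring
  have hyT : ∀ n, y n ∈ Set.range T := fun n => ⟨x n, (hzs n).symm⟩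
  have hyf : ∀ n, y n ∈ Set.range f := fun n => hsub (hyT n)
  obtain ⟨L, hLf, hty⟩ : ∃ L ∈ Set.range f, Filter.Tendsto y Filter.atTop (nhds L) := by
    rcases hcomplete with h | h
    · obtain ⟨L, hL, ht⟩ := cauchySeq_tendsto_of_isComplete h hyT hycauchy
      exact ⟨L, hsub hL, ht⟩
    · exact cauchySeq_tendsto_of_isComplete h hyf hycauchy
  obtain ⟨u, hu⟩ := hLf
  -- show T u = L
  have hty' : Filter.Tendsto (fun n => y (n+1)) Filter.atTop (nhds L) :=
    hty.comp (Filter.tendsto_add_atTop_nat 1)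
  have hTu : T u = L := by
    have hle : ∀ n, dist (T u) (y (n+1)) ≤
        c₁ * max (max (dist (T u) (y n)) (dist (y (n+1)) L)) (dist L (y n)) := by
      intro n
      have h := hcontr u (x (n+1))
      rw [hfz (n+1), ← hzs (n+1), hu] at h
      exact h
    have hlhs : Filter.Tendsto (fun n => dist (T u) (y (n+1))) Filter.atTop
        (nhds (dist (T u) L)) := tendsto_const_nhds.dist hty'
    have hrhs : Filter.Tendsto
        (fun n => c₁ * max (max (dist (T u) (y n)) (dist (y (n+1)) L)) (dist L (y n)))
        Filter.atTop (nhds (c₁ * max (max (dist (T u) L) (dist L L)) (dist L L))) :=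
      Filter.Tendsto.const_mul c₁
        (((tendsto_const_nhds.dist hty).max (hty'.dist tendsto_const_nhds)).max
          (tendsto_const_nhds.dist hty))
    have hlim : dist (T u) L ≤ c₁ * max (max (dist (T u) L) (dist L L)) (dist L L) :=
      le_of_tendsto_of_tendsto' hlhs hrhs hle
    rw [dist_self, max_eq_left dist_nonneg, max_eq_left dist_nonneg] at hlim
    have : dist (T u) L = 0 := by nlinarith [dist_nonneg (x := T u) (y := L)]
    exact dist_eq_zero.mp this
  have hTufu : T u = f u := hTu.trans hu.symm
  have hcom : T L = f L := by
    have h := hwc u hTufu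
    rwa [hu, hTu] at h
  have hTL : T L = L := by
    have h := hcontr L u
    rw [hu, hTu, ← hcom, dist_comm L (T L), max_self, max_self] at h
    have : dist (T L) L = 0 := by nlinarith [dist_nonneg (x := T L) (y := L)]
    exact dist_eq_zero.mp this
  have hfL : f L = L := hcom ▸ hTL
  refine ⟨L, ⟨hTL, hfL⟩, ?_⟩
  rintro w ⟨hTw, hfw⟩
  have h := hcontr L w
  rw [hTL, hfL, hTw, hfw, dist_comm w L, max_self, max_self] at h
  have : dist L w = 0 := by nlinarith [dist_nonneg (x := L) (y := w)]
  exact (dist_eq_zero.mp this).symm ▸ rfl
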